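/- For m ∈ ℕ, m ≥ 1, the even-degree singular value satisfies σ_{2m}² ≤ 4π²(2π²/3 + 1)/(2m+1), where σ_{2m}² = (16π³/(4m+1))((2π²/3)|P̃_{2m}^0(0)|² + 2∑_{j=1}^{m} |P̃_{2m}^{2j}(0)|²/(2j)²). -/

import Mathlib

open Real Finset

/-- The square `|P̃_n^j(0)|²` of the normalized associated Legendre function at zero,
for `n + j` even. -/
noncomputable def ptildeSq (n j : ℕ) : ℝ :=
  (2 * n + 1) / (4 * Real.pi) *
    ((Nat.doubleFactorial (n - j - 1) * Nat.doubleFactorial (n + j - 1) : ℝ) /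
      (Nat.doubleFactorial (n - j) * Nat.doubleFactorial (n + j) : ℝ))

namespace SigmaAux

noncomputable def q (k : ℕ) : ℝ :=
  (Nat.doubleFactorial (2 * k - 1) : ℝ) / (Nat.doubleFactorial (2 * k) : ℝ)

lemma q_pos (k : ℕ) : 0 < q k :=
  div_pos (by exact_mod_cast Nat.doubleFactorial_pos _)
    (by exact_mod_cast Nat.doubleFactorial_pos _)

lemma q_succ (k : ℕ) : q (k + 1) = q k * ((2 * k + 1) / (2 * k + 2)) := by
  have h2 : 2 * (k + 1) = 2 * k + 2 := by ring
  have h1 : 2 * (k + 1) - 1 = 2 * k + 1 := by omega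
  unfold q
  rw [h1, h2]
  have hd2 : Nat.doubleFactorial (2 * k + 2) = (2 * k + 2) * Nat.doubleFactorial (2 * k) :=
    Nat.doubleFactorial_add_two _
  have hd1 : (Nat.doubleFactorial (2 * k + 1) : ℝ)
      = (2 * k + 1) * (Nat.doubleFactorial (2 * k - 1) : ℝ) := by
    cases k with
    | zero => norm_num [Nat.doubleFactorial]
    | succ k' =>
      have e : 2 * (k' + 1) + 1 = (2 * k' + 1) + 2 := by ring
      rw [e, Nat.doubleFactorial_add_two]
      have e2 : 2 * (k' + 1) - 1 = 2 * k' + 1 := by omega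
      rw [e2]
      push_cast; ring
  rw [hd1, hd2]
  have ha : (Nat.doubleFactorial (2 * k) : ℝ) ≠ 0 := by
    exact_mod_cast (Nat.doubleFactorial_pos _).ne'
  have hb : (Nat.doubleFactorial (2 * k - 1) : ℝ) ≠ 0 := by
    exact_mod_cast (Nat.doubleFactorial_pos _).ne'
  push_cast
  field_simp

lemma q_le_one (k : ℕ) : q k ≤ 1 := by
  induction k with
  | zero => simp [q, Nat.doubleFactorial]
  | succ k ih =>
    rw [q_succ]
    have h1 : ((2 * k + 1 : ℝ) / (2 * k + 2)) ≤ 1 := by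
      rw [div_le_one (by positivity)]; linarith
    calc q k * ((2 * k + 1) / (2 * k + 2)) ≤ 1 * 1 :=
          mul_le_mul ih h1 (by positivity) (by linarith [q_pos k])
      _ = 1 := by ring

lemma q_sq (k : ℕ) : q k ^ 2 ≤ 1 / (2 * k + 1) := by
  induction k with
  | zero => simp [q, Nat.doubleFactorial]
  | succ k ih =>
    rw [q_succ, mul_pow]
    have key : q k ^ 2 * ((2 * k + 1) / (2 * k + 2)) ^ 2
        ≤ (1 / (2 * k + 1)) * ((2 * k + 1) / (2 * k + 2)) ^ 2 := by
      apply mul_le_mul_of_nonneg_right ih (by positivity)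
    refine key.trans ?_
    rw [div_pow]
    push_cast
    rw [div_mul_div_comm, div_le_div_iff₀ (by positivity) (by positivity)]
    nlinarith [sq_nonneg ((k:ℝ))]

lemma ptilde_eq (m j : ℕ) (h : j ≤ m) :
    ptildeSq (2 * m) (2 * j) = (4 * m + 1) / (4 * Real.pi) * (q (m - j) * q (m + j)) := by
  unfold ptildeSq q
  have e1 : 2 * m - 2 * j - 1 = 2 * (m - j) - 1 := by omega
  have e2 : 2 * m - 2 * j = 2 * (m - j) := by omega
  have e3 : 2 * m + 2 * j - 1 = 2 * (m + j) - 1 := by omega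
  have e4 : 2 * m + 2 * j = 2 * (m + j) := by omega
  rw [e1, e2, e3, e4]
  rw [show ((2:ℝ) * (2 * m : ℕ) + 1) = 4 * (m:ℝ) + 1 by push_cast; ring]
  rw [mul_div_assoc, div_mul_div_comm, div_mul_div_comm]
  ring

lemma basel_partial (m : ℕ) :
    ∑ j ∈ Finset.Icc 1 m, (1 : ℝ) / (j : ℝ) ^ 2 ≤ π ^ 2 / 6 - 1 / (m + 1) := by
  set f : ℕ → ℝ := fun n => 1 / (n : ℝ) ^ 2 with hf
  have hsum : HasSum f (π ^ 2 / 6) := hasSum_zeta_two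
  have hP : ∑ j ∈ Finset.range (m + 1), f j = ∑ j ∈ Finset.Icc 1 m, f j := by
    rw [Finset.range_eq_Ico, Finset.sum_eq_sum_Ico_succ_bot (Nat.succ_pos m),
      Nat.succ_eq_add_one, Finset.Ico_add_one_right_eq_Icc]
    simp [hf]
  have key : ∀ M : ℕ, ∑ j ∈ Finset.range (m + 1), f j
      + (1 / (m + 1) - 1 / (m + 1 + M)) ≤ π ^ 2 / 6 := by
    intro M
    have h1 : ∑ j ∈ Finset.range (m + 1 + M), f j ≤ π ^ 2 / 6 := by
      apply sum_le_hasSum _ _ hsum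
      intro i _
      positivity
    have h2 : ∑ j ∈ Finset.range (m + 1 + M), f j
        = ∑ j ∈ Finset.range (m + 1), f j + ∑ i ∈ Finset.range M, f (m + 1 + i) := by
      rw [Finset.sum_range_add]
    set g : ℕ → ℝ := fun i => 1 / ((m : ℝ) + 1 + i) with hg
    have h3 : ∑ i ∈ Finset.range M, (g i - g (i + 1)) = g 0 - g M := Finset.sum_range_sub' g M
    have h4 : ∀ i, g i - g (i + 1) ≤ f (m + 1 + i) := by
      intro i
      have hp1 : (0:ℝ) < (m : ℝ) + 1 + i := by positivity
      have hp2 : (0:ℝ) < (m : ℝ) + 1 + (i + 1) := by positivity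
      have hstep : g i - g (i + 1) = 1 / (((m:ℝ) + 1 + i) * ((m:ℝ) + 1 + i + 1)) := by
        simp only [hg]
        rw [div_sub_div _ _ (ne_of_gt hp1) (by push_cast at hp2 ⊢; linarith)]
        push_cast
        ring_nf
      rw [hstep, hf]
      have hc : ((m + 1 + i : ℕ) : ℝ) = (m:ℝ) + 1 + i := by push_cast; ring
      simp only [hc]
      apply div_le_div_of_nonneg_left (by norm_num) (by positivity)
      nlinarith
    have h5 : g 0 - g M ≤ ∑ i ∈ Finset.range M, f (m + 1 + i) := by
      rw [← h3]
      exact Finset.sum_le_sum fun i _ => h4 i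
    have h6 : g 0 = 1 / ((m:ℝ) + 1) := by simp [hg]
    have h7 : g M = 1 / ((m:ℝ) + 1 + M) := rfl
    rw [h6, h7] at h5
    linarith [h1, h2.symm.le]
  have hlim : Filter.Tendsto
      (fun M : ℕ => ∑ j ∈ Finset.range (m + 1), f j + (1 / ((m:ℝ) + 1) - 1 / (m + 1 + M)))
      Filter.atTop
      (nhds (∑ j ∈ Finset.range (m + 1), f j + (1 / ((m:ℝ) + 1) - 0))) := by
    apply Filter.Tendsto.add tendsto_const_nhds
    apply Filter.Tendsto.sub tendsto_const_nhds
    have hbase : Filter.Tendsto (fun M : ℕ => ((M:ℝ) + ((m:ℝ) + 1))) Filter.atTop Filter.atTop :=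
      Filter.tendsto_atTop_add_const_right _ _ tendsto_natCast_atTop_atTop
    have := hbase.inv_tendsto_atTop
    simp only [Pi.inv_def] at this
    convert this using 2 with M
    rw [one_div]
    congr 1
    ring
  have hle := le_of_tendsto hlim (Filter.Eventually.of_forall key)
  rw [← hP]
  simp only [sub_zero] at hle
  linarith

lemma sum_odd_le_sqrt : ∀ m : ℕ, ∑ i ∈ Finset.range m, (1:ℝ)/(2*(i:ℝ)+1) ≤ Real.sqrt m := by
  intro m
  induction m with
  | zero => simp
  | succ m ih =>
    rw [Finset.sum_range_succ]
    set a := Real.sqrt m with ha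
    set b := Real.sqrt (m+1) with hb
    have ha0 : 0 ≤ a := Real.sqrt_nonneg _
    have hb0 : 0 ≤ b := Real.sqrt_nonneg _
    have ha2 : a^2 = m := Real.sq_sqrt (by positivity)
    have hb2 : b^2 = (m:ℝ)+1 := by
      rw [hb]
      rw [show ((m:ℕ):ℝ) + 1 = (((m+1:ℕ)):ℝ) by push_cast; ring]
      exact Real.sq_sqrt (by positivity)
    have hb1 : 1 ≤ b := by nlinarith
    have hab : a ≤ b := by nlinarith
    have hkey : a + 1/(2*(m:ℝ)+1) ≤ b := by
      rcases Nat.eq_zero_or_pos m with h0 | h1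
      · subst h0
        simp only [Nat.cast_zero] at ha2 hb2 ⊢
        have haz : a = 0 := by nlinarith
        rw [haz]
        norm_num
      · have ha1 : 1 ≤ a := by
          have : (1:ℝ) ≤ m := by exact_mod_cast h1
          nlinarith
        have hprod : (b - a) * (a + b) = 1 := by nlinarith
        have hsum : a + b ≤ 2*(m:ℝ)+1 := by nlinarith
        have hba : 0 < b - a := by
          rcases lt_or_eq_of_le hab with h | h
          · linarith
          · exfalso; rw [h] at ha2; nlinarith
        have h2 : 1 ≤ (b - a) * (2*(m:ℝ)+1) := by nlinarith
        have hpos : (0:ℝ) < 2*(m:ℝ)+1 := by positivity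
        have h3 : 1/(2*(m:ℝ)+1) ≤ b - a := by
          rw [div_le_iff₀ hpos]
          linarith
        linarith
    calc ∑ i ∈ Finset.range m, (1:ℝ)/(2*(i:ℝ)+1) + 1/(2*(m:ℝ)+1)
        ≤ a + 1/(2*(m:ℝ)+1) := by linarith
      _ ≤ b := hkey
      _ = Real.sqrt ((m:ℕ) + 1 : ℕ) := by rw [hb]; norm_num

lemma sum_Q1 (m : ℕ) :
    ∑ j ∈ Finset.Icc 1 m, (1:ℝ)/(2*(((m - j : ℕ)):ℝ)+1) ≤ Real.sqrt m := by
  have hre : ∑ j ∈ Finset.Icc 1 m, (1:ℝ)/(2*(((m - j : ℕ)):ℝ)+1)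
      = ∑ i ∈ Finset.range m, (1:ℝ)/(2*(i:ℝ)+1) := by
    apply Finset.sum_bij' (fun j _ => m - j) (fun i _ => m - i)
    · intro a ha
      simp only [Finset.mem_Icc] at ha
      simp only [Finset.mem_range]
      omega
    · intro a ha
      simp only [Finset.mem_range] at ha
      simp only [Finset.mem_Icc]
      omega
    · intro a ha
      simp only [Finset.mem_Icc] at ha
      omega
    · intro a ha
      simp only [Finset.mem_range] at ha
      omega
    · intro a ha
      rfl
  rw [hre]
  exact sum_odd_le_sqrt m

lemma star (m : ℕ) (hm : 1 ≤ m) :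
    (∑ j ∈ Finset.Icc 1 m, (1:ℝ)/(j:ℝ)^2)
      + (2/(2*(m:ℝ)+1)) * ((∑ j ∈ Finset.Icc 1 m, (1:ℝ)/(2*(((m - j : ℕ)):ℝ)+1))
        + (∑ j ∈ Finset.Icc 1 m, (1:ℝ)/(2*(((m + j : ℕ)):ℝ)+1))) ≤ 2 := by
  rcases le_or_gt m 4 with h4 | h5
  · interval_cases m <;>
      norm_num [Finset.sum_Icc_succ_top, Finset.Icc_self]
  · have hm5 : (5:ℝ) ≤ (m:ℝ) := by exact_mod_cast h5
    have h1 : (0:ℝ) < (m:ℝ) + 1 := by positivity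
    have h2 : (0:ℝ) < 2*(m:ℝ) + 1 := by positivity
    have hP := basel_partial m
    have hQ1 := sum_Q1 m
    have hQ2 : ∑ j ∈ Finset.Icc 1 m, (1:ℝ)/(2*(((m + j : ℕ)):ℝ)+1) ≤ 1/2 := by
      calc ∑ j ∈ Finset.Icc 1 m, (1:ℝ)/(2*(((m + j : ℕ)):ℝ)+1)
          ≤ ∑ j ∈ Finset.Icc 1 m, (1:ℝ)/(2*(m:ℝ)+2) := by
            apply Finset.sum_le_sum
            intro j hj
            simp only [Finset.mem_Icc] at hj
            apply one_div_le_one_div_of_le (by positivity)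
            push_cast
            have : (1:ℝ) ≤ (j:ℝ) := by exact_mod_cast hj.1
            linarith
        _ = (m:ℝ) * (1/(2*(m:ℝ)+2)) := by
            rw [Finset.sum_const, Nat.card_Icc]
            simp [nsmul_eq_mul]
        _ ≤ 1/2 := by
            rw [mul_one_div, div_le_div_iff₀ (by positivity) (by norm_num)]
            linarith
    set t := Real.sqrt m with ht
    have ht0 : 0 ≤ t := Real.sqrt_nonneg _
    have ht2 : t^2 = (m:ℝ) := Real.sq_sqrt (by positivity)
    have ht22 : (2.2:ℝ) ≤ t := by nlinarith
    have hπ : π^2 ≤ 9.8696066 := by nlinarith [Real.pi_lt_d6, Real.pi_gt_three]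
    have hc : (0.355:ℝ) ≤ 2 - π^2/6 := by nlinarith
    have hB : (0:ℝ) < 2/(2*(m:ℝ)+1) := by positivity
    have step : (2/(2*(m:ℝ)+1)) * ((∑ j ∈ Finset.Icc 1 m, (1:ℝ)/(2*(((m - j : ℕ)):ℝ)+1))
        + (∑ j ∈ Finset.Icc 1 m, (1:ℝ)/(2*(((m + j : ℕ)):ℝ)+1)))
        ≤ (2/(2*(m:ℝ)+1)) * (t + 1/2) := by
      apply mul_le_mul_of_nonneg_left _ (le_of_lt hB)
      linarith
    have final : π^2/6 - 1/((m:ℝ)+1) + 2/(2*(m:ℝ)+1)*(t+1/2) ≤ 2 := by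
      rw [← sub_nonneg]
      have expand : 2 - (π^2/6 - 1/((m:ℝ)+1) + 2/(2*(m:ℝ)+1)*(t+1/2)) =
          ((2 - π^2/6)*((m:ℝ)+1)*(2*(m:ℝ)+1) + (2*(m:ℝ)+1) - (2*t+1)*((m:ℝ)+1))
            / (((m:ℝ)+1)*(2*(m:ℝ)+1)) := by
        field_simp
        ring
      rw [expand]
      apply div_nonneg _ (by positivity)
      have hcc : (0.355:ℝ)*(((m:ℝ)+1)*(2*(m:ℝ)+1)) ≤ (2 - π^2/6)*(((m:ℝ)+1)*(2*(m:ℝ)+1)) :=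
        mul_le_mul_of_nonneg_right hc (by positivity)
      nlinarith [sq_nonneg (t-2), mul_nonneg (sq_nonneg (t-2)) (sq_nonneg t),
        mul_nonneg (sq_nonneg (t-2)) ht0, ht22, ht2, hcc]
    linarith

end SigmaAux

open SigmaAux

theorem sigmaSq_even_upper (m : ℕ) (hm : 1 ≤ m) :
    16 * Real.pi ^ 3 / (4 * (m : ℝ) + 1) *
        (2 * Real.pi ^ 2 / 3 * ptildeSq (2 * m) 0 +
          2 * ∑ j ∈ Finset.Icc 1 m, ptildeSq (2 * m) (2 * j) / (2 * (j : ℝ)) ^ 2) ≤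
      4 * Real.pi ^ 2 * (2 * Real.pi ^ 2 / 3 + 1) / (2 * (m : ℝ) + 1) := by
  have hπ : (0:ℝ) < π := Real.pi_pos
  have hM : (0:ℝ) < 4 * (m:ℝ) + 1 := by positivity
  have hN : (0:ℝ) < 2 * (m:ℝ) + 1 := by positivity
  -- rewrite ptildeSq at 0
  have h0 : ptildeSq (2 * m) 0 = (4 * m + 1) / (4 * π) * (q m * q m) := by
    have := ptilde_eq m 0 (Nat.zero_le m)
    simpa using this
  -- rewrite sum terms
  have hsum_eq : ∑ j ∈ Finset.Icc 1 m, ptildeSq (2 * m) (2 * j) / (2 * (j : ℝ)) ^ 2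
      = (4 * m + 1) / (4 * π) *
        ∑ j ∈ Finset.Icc 1 m, q (m - j) * q (m + j) / (2 * (j : ℝ)) ^ 2 := by
    rw [Finset.mul_sum]
    apply Finset.sum_congr rfl
    intro j hj
    simp only [Finset.mem_Icc] at hj
    rw [ptilde_eq m j hj.2]
    ring
  rw [h0, hsum_eq]
  set S := ∑ j ∈ Finset.Icc 1 m, q (m - j) * q (m + j) / (2 * (j : ℝ)) ^ 2 with hS
  -- key inequalities
  have e1 : q m * q m ≤ 1 / (2 * (m:ℝ) + 1) := by
    have := q_sq m
    nlinarith [q_pos m]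
  have e2 : S ≤ 1 / (2 * (2 * (m:ℝ) + 1)) := by
    -- termwise bound then the star estimate
    have term_bd : ∀ j ∈ Finset.Icc 1 m,
        q (m - j) * q (m + j) / (2 * (j : ℝ)) ^ 2
          ≤ (1/(4*(2*(m:ℝ)+1))) * ((1:ℝ)/(j:ℝ)^2
            + (2/(2*(m:ℝ)+1)) * ((1:ℝ)/(2*(((m - j : ℕ)):ℝ)+1) + (1:ℝ)/(2*(((m + j : ℕ)):ℝ)+1))) := by
      intro j hj
      simp only [Finset.mem_Icc] at hj
      have hj1 : (1:ℝ) ≤ (j:ℝ) := by exact_mod_cast hj.1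
      have hjm : (j:ℝ) ≤ (m:ℝ) := by exact_mod_cast hj.2
      have hmj : (((m - j : ℕ)):ℝ) = (m:ℝ) - (j:ℝ) := by
        push_cast [Nat.cast_sub hj.2]
        ring
      have hpj : (((m + j : ℕ)):ℝ) = (m:ℝ) + (j:ℝ) := by push_cast; ring
      rw [hmj, hpj]
      have hx : (0:ℝ) < 2*((m:ℝ)-(j:ℝ))+1 := by linarith
      have hy : (0:ℝ) < 2*((m:ℝ)+(j:ℝ))+1 := by linarith
      have hj0 : (0:ℝ) < (j:ℝ) := by linarith
      -- step 1: product of q's bounded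
      have hq1 : q (m - j) ^ 2 ≤ 1 / (2*((m:ℝ)-(j:ℝ))+1) := by
        have := q_sq (m - j)
        rwa [hmj] at this
      have hq2 : q (m + j) ^ 2 ≤ 1 / (2*((m:ℝ)+(j:ℝ))+1) := by
        have := q_sq (m + j)
        rwa [hpj] at this
      have hprod : q (m - j) * q (m + j)
          ≤ (1/2) * (1 / (2*((m:ℝ)-(j:ℝ))+1) + 1 / (2*((m:ℝ)+(j:ℝ))+1)) := by
        nlinarith [sq_nonneg (q (m-j) - q (m+j)), q_pos (m-j), q_pos (m+j)]
      have hdiv : q (m - j) * q (m + j) / (2 * (j : ℝ)) ^ 2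
          ≤ ((1/2) * (1 / (2*((m:ℝ)-(j:ℝ))+1) + 1 / (2*((m:ℝ)+(j:ℝ))+1))) / (2 * (j : ℝ)) ^ 2 := by
        gcongr
      -- step 2: algebraic identity
      have hident : ((1/2) * (1 / (2*((m:ℝ)-(j:ℝ))+1) + 1 / (2*((m:ℝ)+(j:ℝ))+1))) / (2 * (j : ℝ)) ^ 2
          = (1/(4*(2*(m:ℝ)+1))) * ((1:ℝ)/(j:ℝ)^2
            + (2/(2*(m:ℝ)+1)) * ((1:ℝ)/(2*((m:ℝ)-(j:ℝ))+1) + (1:ℝ)/(2*((m:ℝ)+(j:ℝ))+1))) := by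
        field_simp
        ring
      rw [hident] at hdiv
      exact hdiv
    have hsum_le := Finset.sum_le_sum term_bd
    rw [hS]
    refine hsum_le.trans ?_
    rw [← Finset.mul_sum]
    rw [Finset.sum_add_distrib, ← Finset.mul_sum]
    have hstar := star m hm
    have h4N : (0:ℝ) < 1/(4*(2*(m:ℝ)+1)) := by positivity
    calc (1/(4*(2*(m:ℝ)+1))) * ((∑ j ∈ Finset.Icc 1 m, (1:ℝ)/(j:ℝ)^2)
            + (2/(2*(m:ℝ)+1)) * ((∑ j ∈ Finset.Icc 1 m, ((1:ℝ)/(2*(((m - j : ℕ)):ℝ)+1)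
              + (1:ℝ)/(2*(((m + j : ℕ)):ℝ)+1)))))
        ≤ (1/(4*(2*(m:ℝ)+1))) * 2 := by
          apply mul_le_mul_of_nonneg_left _ (le_of_lt h4N)
          rw [Finset.sum_add_distrib]
          exact hstar
      _ = 1 / (2 * (2 * (m:ℝ) + 1)) := by
          field_simp
          ring
  -- assemble
  have hfac : 16 * π ^ 3 / (4 * (m:ℝ) + 1) * ((4 * (m:ℝ) + 1) / (4 * π)) = 4 * π ^ 2 := by
    field_simp
    ring
  have lhs_eq : 16 * π ^ 3 / (4 * (m:ℝ) + 1) *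
      (2 * π ^ 2 / 3 * ((4 * (m:ℝ) + 1) / (4 * π) * (q m * q m))
        + 2 * ((4 * (m:ℝ) + 1) / (4 * π) * S))
      = 4 * π ^ 2 * (2 * π ^ 2 / 3 * (q m * q m) + 2 * S) := by
    field_simp
    ring
  rw [lhs_eq]
  have inner : 2 * π ^ 2 / 3 * (q m * q m) + 2 * S ≤ (2 * π ^ 2 / 3 + 1) / (2 * (m:ℝ) + 1) := by
    have i1 : 2 * π ^ 2 / 3 * (q m * q m) ≤ 2 * π ^ 2 / 3 * (1 / (2 * (m:ℝ) + 1)) :=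
      mul_le_mul_of_nonneg_left e1 (by positivity)
    have i2 : 2 * S ≤ 2 * (1 / (2 * (2 * (m:ℝ) + 1))) := by linarith
    have i3 : 2 * π ^ 2 / 3 * (1 / (2 * (m:ℝ) + 1)) + 2 * (1 / (2 * (2 * (m:ℝ) + 1)))
        = (2 * π ^ 2 / 3 + 1) / (2 * (m:ℝ) + 1) := by
      field_simp
    linarith
  calc 4 * π ^ 2 * (2 * π ^ 2 / 3 * (q m * q m) + 2 * S)
      ≤ 4 * π ^ 2 * ((2 * π ^ 2 / 3 + 1) / (2 * (m:ℝ) + 1)) :=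
        mul_le_mul_of_nonneg_left inner (by positivity)
    _ = 4 * π ^ 2 * (2 * π ^ 2 / 3 + 1) / (2 * (m:ℝ) + 1) := by
        ring
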